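/- In the game on n slices, before any of Bob's turns the remaining slices form a contiguous arc p_i p_{i+1} ... p_{i+2j-1} of even length; letting K be the slices at odd positions and L those at even positions of this arc, Bob has a strategy making only shifts (except possibly his first turn) that guarantees him all slices of K, and another guaranteeing him all slices of L; hence he can guarantee max{|K|, |L|} in addition to slices already taken. -/

import Mathlib

/-- Adjacency of slices on the circular pizza with `n` slices. -/
def adj (n : ℕ) (i j : Fin n) : Prop :=
  (i.1 + 1) % n = j.1 ∨ (j.1 + 1) % n = i.1

instance (n : ℕ) (i j : Fin n) : Decidable (adj n i j) := by
  unfold adj; infer_instance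

/-- `h` lists the slices taken so far, in the order they were taken.
It is a valid (partial) play of the Polite Pizza Protocol if no slice is taken
twice and every slice except the first is adjacent to a previously taken one. -/
def ValidHist (n : ℕ) (h : List (Fin n)) : Prop :=
  h.Nodup ∧ ∀ (k : ℕ) (hk : k < h.length), 0 < k →
    ∃ (j : ℕ) (hj : j < k), adj n (h.get ⟨k, hk⟩) (h.get ⟨j, hj.trans hk⟩)

/-- `m` is a legal next slice after history `h`. -/
def ValidMove (n : ℕ) (h : List (Fin n)) (m : Fin n) : Prop :=
  m ∉ h ∧ (h = [] ∨ ∃ x ∈ h, adj n m x)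

/-- Total size of the slices taken at (0-based) turns satisfying `f`. -/
def gainOn (n : ℕ) (P : Fin n → ℝ) (f : ℕ → Bool) (l : List (Fin n)) : ℝ :=
  ((l.zipIdx.map Prod.swap |>.filter (fun p => f p.1)).map (fun p => P p.2)).sum

/-- Alice moves at even turns (0-based), Bob at odd turns. -/
def isAlice (k : ℕ) : Bool := k % 2 == 0
def isBob (k : ℕ) : Bool := k % 2 == 1

def aliceGain (n : ℕ) (P : Fin n → ℝ) (l : List (Fin n)) : ℝ := gainOn n P isAlice l
def bobGain (n : ℕ) (P : Fin n → ℝ) (l : List (Fin n)) : ℝ := gainOn n P isBob l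

/-- The play `l` is consistent with the strategy `s` used at the turns satisfying `f`. -/
def Consistent (n : ℕ) (f : ℕ → Bool) (s : List (Fin n) → Fin n) (l : List (Fin n)) : Prop :=
  ∀ (k : ℕ) (hk : k < l.length), f k → l.get ⟨k, hk⟩ = s (l.take k)

/-- The strategy `s`, used at turns satisfying `f`, always produces legal moves. -/
def Legal (n : ℕ) (f : ℕ → Bool) (s : List (Fin n) → Fin n) : Prop :=
  ∀ h, ValidHist n h → h.length < n → f h.length → ValidMove n h (s h)

/-- Number of jumps made at turns satisfying `f` during the play `l`:
turn `k ≥ 1` is a jump if the slice taken is not adjacent to the one taken at turn `k-1`. -/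
def jumpCount (n : ℕ) (f : ℕ → Bool) (l : List (Fin n)) : ℕ :=
  ((((l.zip l.tail).zipIdx.map Prod.swap)).filter
    (fun p => f (p.1 + 1) && !(decide (adj n p.2.2 p.2.1)))).length

/-- Alice has a strategy making at most `j` jumps and guaranteeing her
slices of total size at least `g`. -/
def AliceJGain (n : ℕ) (P : Fin n → ℝ) (j : ℕ) (g : ℝ) : Prop :=
  ∃ s : List (Fin n) → Fin n, Legal n isAlice s ∧
    ∀ l : List (Fin n), ValidHist n l → l.length = n → Consistent n isAlice s l →
      g ≤ aliceGain n P l ∧ jumpCount n isAlice l ≤ j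

/-- Alice has a strategy guaranteeing her slices of total size at least `g`. -/
def AliceGain' (n : ℕ) (P : Fin n → ℝ) (g : ℝ) : Prop :=
  ∃ s : List (Fin n) → Fin n, Legal n isAlice s ∧
    ∀ l : List (Fin n), ValidHist n l → l.length = n → Consistent n isAlice s l →
      g ≤ aliceGain n P l

/-- Bob (moving second) has a strategy guaranteeing him slices of total size at least `g`. -/
def BobGain' (n : ℕ) (P : Fin n → ℝ) (g : ℝ) : Prop :=
  ∃ s : List (Fin n) → Fin n, Legal n isBob s ∧
    ∀ l : List (Fin n), ValidHist n l → l.length = n → Consistent n isBob s l →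
      g ≤ bobGain n P l

namespace PizzaAux

open Fin.NatCast

lemma val_add_one' (n : ℕ) [NeZero n] (y : Fin n) : (y + 1).val = (y.val + 1) % n := by
  rw [Fin.add_def, Fin.val_one']
  show (y.val + 1 % n) % n = _
  conv_lhs => rw [Nat.add_mod]
  conv_rhs => rw [Nat.add_mod]
  rw [Nat.mod_mod]

lemma adj_succ (n : ℕ) [NeZero n] (y : Fin n) : adj n (y + 1) y :=
  Or.inr (val_add_one' n y).symm

lemma adj_succ' (n : ℕ) [NeZero n] (y : Fin n) : adj n y (y + 1) :=
  Or.inl (val_add_one' n y).symm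

lemma cast_inj (n : ℕ) [NeZero n] {k k' : ℕ} (hk : k < n) (hk' : k' < n) (i : Fin n)
    (h : i + ((k : ℕ) : Fin n) = i + ((k' : ℕ) : Fin n)) : k = k' := by
  have h0 := add_left_cancel h
  have h1 := Fin.val_cast_of_lt (n := n) hk
  have h2 := Fin.val_cast_of_lt (n := n) hk'
  rw [Fin.ext_iff] at h0; omega

lemma cast_succ (n : ℕ) [NeZero n] (i : Fin n) (k : ℕ) :
    i + ((k + 1 : ℕ) : Fin n) = (i + ((k : ℕ) : Fin n)) + 1 := by push_cast; abel

lemma get_not_mem_take {α} (l : List α) (hnd : l.Nodup) (p : ℕ) (hp : p < l.length) :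
    l.get ⟨p, hp⟩ ∉ l.take p := by
  intro hmem
  rw [List.mem_take_iff_getElem] at hmem
  obtain ⟨idx, hidx, he⟩ := hmem
  have h2 := (List.Nodup.getElem_inj_iff hnd (i := idx) (hi := by omega) (j := p) (hj := hp)).mp
    (by simpa using he)
  omega

lemma mem_take_of_get {α} (l : List α) (q p : ℕ) (hq : q < p) (hp : p ≤ l.length) :
    l.get ⟨q, by omega⟩ ∈ l.take p := by
  rw [List.mem_take_iff_getElem]
  exact ⟨q, by omega, by simp⟩

lemma mem_take_succ_iff {α} (l : List α) (p : ℕ) (hp : p < l.length) (m : α) :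
    m ∈ l.take (p + 1) ↔ m ∈ l.take p ∨ m = l.get ⟨p, hp⟩ := by
  rw [List.take_succ, List.getElem?_eq_getElem hp, List.mem_append]
  simp [List.get_eq_getElem]

lemma getLast?_take {α} (l : List α) (k : ℕ) (h : 0 < k) (h2 : k ≤ l.length) :
    (l.take k).getLast? = some (l.get ⟨k - 1, by omega⟩) := by
  rw [List.getLast?_eq_getElem?]
  have hl : (l.take k).length = k := by simp; omega
  rw [hl, List.getElem?_take, if_pos (by omega), List.getElem?_eq_getElem (by omega)]
  simp

lemma exists_validMove (n : ℕ) [NeZero n] (h' : List (Fin n)) (hlen : h'.length < n) :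
    ∃ m, ValidMove n h' m := by
  classical
  have hex : ∃ m : Fin n, m ∉ h' := by
    by_contra hc; push_neg at hc
    have h1 : (Finset.univ : Finset (Fin n)).card ≤ h'.toFinset.card :=
      Finset.card_le_card (fun m _ => List.mem_toFinset.mpr (hc m))
    have h2 := h'.toFinset_card_le
    simp at h1; omega
  obtain ⟨m0, hm0⟩ := hex
  by_cases hnil : h' = []
  · exact ⟨m0, hm0, Or.inl hnil⟩
  · obtain ⟨x, hx⟩ := List.exists_mem_of_ne_nil h' hnil
    have hQ : ∃ k : ℕ, x + ((k + 1 : ℕ) : Fin n) ∉ h' := by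
      refine ⟨(m0 - x).val - 1, ?_⟩
      have hne : m0 ≠ x := fun he => hm0 (he ▸ hx)
      have hd : (m0 - x).val ≠ 0 := by
        intro h0
        apply hne
        have : m0 - x = 0 := Fin.ext (by simpa using h0)
        rwa [sub_eq_zero] at this
      have he1 : (m0 - x).val - 1 + 1 = (m0 - x).val := by omega
      rw [he1, Fin.cast_val_eq_self]
      simpa using hm0
    have ht := Nat.find_spec hQ
    set t := Nat.find hQ with htdef
    have htm : x + ((t : ℕ) : Fin n) ∈ h' := by
      rcases Nat.eq_zero_or_pos t with h0 | h0
      · rw [h0]; simpa using hx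
      · have hmin := Nat.find_min hQ (show t - 1 < t by omega)
        rw [not_not] at hmin
        have : t - 1 + 1 = t := by omega
        rwa [this] at hmin
    refine ⟨x + ((t + 1 : ℕ) : Fin n), ht, Or.inr ⟨x + ((t : ℕ) : Fin n), htm, ?_⟩⟩
    rw [cast_succ]
    exact adj_succ n _

lemma gainFrom_eq (n : ℕ) (P : Fin n → ℝ) :
    ∀ (l : List (Fin n)) (s : ℕ) (f : ℕ → Bool),
    ((((l.zipIdx s).map Prod.swap).filter (fun p => f p.1)).map (fun p => P p.2)).sum
      = ∑ k : Fin l.length, if f (s + k.val) then P (l.get k) else 0 := by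
  intro l
  induction l with
  | nil => intro s f; simp
  | cons a l ih =>
    intro s f
    rw [List.zipIdx_cons, List.map_cons, List.filter_cons]
    show _ = ∑ k : Fin (l.length + 1), if f (s + k.val) then P ((a :: l).get k) else 0
    rw [Fin.sum_univ_succ]
    have h2 : (∑ k : Fin l.length,
          if f (s + ((k.succ : Fin (l.length + 1))).val) then P ((a :: l).get k.succ) else 0)
        = ∑ k : Fin l.length, if f (s + 1 + k.val) then P (l.get k) else 0 := by
      refine Finset.sum_congr rfl fun k _ => ?_
      have hv : s + ((k.succ : Fin (l.length + 1))).val = s + 1 + k.val := by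
        simp [Fin.val_succ]; omega
      rw [hv]; rfl
    rw [h2, ← ih]
    by_cases hf : f s
    · simp [hf]
    · simp [hf]

lemma gainOn_eq (n : ℕ) (P : Fin n → ℝ) (f : ℕ → Bool) (l : List (Fin n)) :
    gainOn n P f l = ∑ k : Fin l.length, if f k.val then P (l.get k) else 0 := by
  have := gainFrom_eq n P l 0 f
  simpa [gainOn] using this

/-- Bob's intended move. -/
def intended (n N : ℕ) [NeZero n] (first : Fin n) (h' : List (Fin n)) : Fin n :=
  if h'.length = N then first
  else match h'.getLast? with
    | none => first
    | some x => if x + 1 ∈ h' then x - 1 else x + 1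

open Classical in
/-- Bob's strategy: intended move if legal, else any legal move. -/
noncomputable def strat (n N : ℕ) [NeZero n] (first : Fin n) (h' : List (Fin n)) : Fin n :=
  if ValidMove n h' (intended n N first h') then intended n N first h'
  else if hv : ∃ m, ValidMove n h' m then Classical.choose hv else intended n N first h'

lemma strat_eq_intended (n N : ℕ) [NeZero n] (first : Fin n) (h' : List (Fin n))
    (hv : ValidMove n h' (intended n N first h')) :
    strat n N first h' = intended n N first h' := by
  unfold strat
  rw [if_pos hv]

lemma strat_valid (n N : ℕ) [NeZero n] (first : Fin n) (h' : List (Fin n))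
    (hlen : h'.length < n) : ValidMove n h' (strat n N first h') := by
  unfold strat
  split
  · assumption
  · have hex := exists_validMove n h' hlen
    rw [dif_pos hex]
    exact Classical.choose_spec hex

lemma intended_eq (n N : ℕ) [NeZero n] (first : Fin n) (h' : List (Fin n)) (x : Fin n)
    (hL : h'.length ≠ N) (hx : h'.getLast? = some x) :
    intended n N first h' = if x + 1 ∈ h' then x - 1 else x + 1 := by
  unfold intended
  rw [if_neg hL, hx]

lemma endpoint_forced (n : ℕ) [NeZero n] (i : Fin n) (l : List (Fin n))
    (hl : ValidHist n l) (p : ℕ) (hp : p < l.length) (hp1 : 0 < p)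
    (a b : ℕ) (hab : a < b)
    (hchar : ∀ m', m' ∉ l.take p ↔ ∃ k, a ≤ k ∧ k < b ∧ m' = i + ((k : ℕ) : Fin n)) :
    l.get ⟨p, hp⟩ = i + ((a : ℕ) : Fin n) ∨ l.get ⟨p, hp⟩ = i + ((b - 1 : ℕ) : Fin n) := by
  set x := l.get ⟨p, hp⟩ with hxdef
  have hx : x ∉ l.take p := get_not_mem_take l hl.1 p hp
  obtain ⟨k, hk1, hk2, hk3⟩ := (hchar x).mp hx
  by_contra hcon
  push_neg at hcon
  have hka : k ≠ a := fun he => hcon.1 (by rw [hk3, he])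
  have hkb : k ≠ b - 1 := fun he => hcon.2 (by rw [hk3, he])
  obtain ⟨q, hq, hadjq⟩ := hl.2 p hp hp1
  set y := l.get ⟨q, hq.trans hp⟩ with hydef
  have hy : y ∈ l.take p := mem_take_of_get l q p hq (le_of_lt hp)
  have hy' : ¬ ∃ k', a ≤ k' ∧ k' < b ∧ y = i + ((k' : ℕ) : Fin n) := by
    rw [← hchar]; simpa using hy
  rcases hadjq with h1 | h2
  · have hyx : y = x + 1 := Fin.ext (by rw [val_add_one']; exact h1.symm)
    refine hy' ⟨k + 1, by omega, by omega, ?_⟩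
    rw [hyx, hk3, cast_succ]
  · have hxy : x = y + 1 := Fin.ext (by rw [val_add_one']; exact h2.symm)
    have hx2 : x = i + ((k - 1 : ℕ) : Fin n) + 1 := by
      rw [← cast_succ, hk3]
      congr 2
      omega
    refine hy' ⟨k - 1, by omega, by omega, ?_⟩
    have := hxy.symm.trans hx2
    exact add_right_cancel this

set_option maxHeartbeats 2000000 in
lemma main_aux (n : ℕ) [NeZero n]
    (P : Fin n → ℝ) (h : List (Fin n)) (hh : ValidHist n h) (hodd : h.length % 2 = 1)
    (j : ℕ) (hj : 1 ≤ j) (hlen : h.length + 2 * j = n) (i : Fin n)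
    (hrem : ∀ m : Fin n, m ∉ h ↔ ∃ k < 2 * j, m = i + ((k : ℕ) : Fin n))
    (ε : ℕ) (hε : ε ≤ 1) :
    ∃ s : List (Fin n) → Fin n,
      (∀ h', h'.length < n → ValidMove n h' (s h')) ∧
      ∀ l : List (Fin n), ValidHist n l → l.length = n → h <+: l →
        (∀ (k : ℕ) (hk : k < l.length), k % 2 = 1 → h.length ≤ k →
          l.get ⟨k, hk⟩ = s (l.take k)) →
        (∀ (t : ℕ) (ht : t < l.length) (ht' : t - 1 < l.length),
          h.length < t → t % 2 = 1 → adj n (l.get ⟨t, ht⟩) (l.get ⟨t - 1, ht'⟩)) ∧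
        (∑ k ∈ Finset.range j, P (i + (((2 * k + ε : ℕ)) : Fin n)))
          ≤ gainOn n P (fun k => (k % 2 == 1) && (h.length ≤ k : Bool)) l := by
  classical
  have hN1 : 1 ≤ h.length := by omega
  have h2j : 2 * j < n := by omega
  have hε01 : ε = 0 ∨ ε = 1 := by omega
  obtain ⟨f0, hf0⟩ : ∃ f0 : ℕ, f0 = ε * (2 * j - 1) := ⟨_, rfl⟩
  have hf0lt : f0 < 2 * j := by rcases hε01 with rfl | rfl <;> omega
  have hf0par : f0 % 2 = ε := by rcases hε01 with rfl | rfl <;> omega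
  obtain ⟨first, hfirstdef⟩ : ∃ fst : Fin n, fst = i + ((f0 : ℕ) : Fin n) := ⟨_, rfl⟩
  have inj : ∀ k k' : ℕ, k < n → k' < n →
      i + ((k : ℕ) : Fin n) = i + ((k' : ℕ) : Fin n) → k = k' :=
    fun k k' hk hk' he => cast_inj n hk hk' i he
  refine ⟨strat n h.length first, fun h' hl' => strat_valid n h.length first h' hl', ?_⟩
  intro l hl hn hpre hcons
  have htake : l.take h.length = h := (List.prefix_iff_eq_take.mp hpre).symm
  have hchar0 : ∀ m : Fin n, m ∉ l.take h.length ↔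
      ∃ k, k < 2 * j ∧ m = i + ((k : ℕ) : Fin n) := by
    intro m; rw [htake]; simpa using hrem m
  -- Bob's first move is valid
  have hfirst_valid : ValidMove n h first := by
    constructor
    · rw [hrem]; exact ⟨f0, hf0lt, hfirstdef⟩
    · right
      rcases hε01 with hcase | hcase
      · refine ⟨i - 1, ?_, ?_⟩
        · by_contra hmem
          rw [hrem] at hmem
          obtain ⟨k, hk, he⟩ := hmem
          have h1 : i + ((0 : ℕ) : Fin n) = i + ((k + 1 : ℕ) : Fin n) := by
            rw [cast_succ, ← he]
            simp
          have := inj 0 (k + 1) (by omega) (by omega) h1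
          omega
        · have he : first = (i - 1) + 1 := by
            rw [hfirstdef, hf0, hcase]
            simp
          rw [he]; exact adj_succ n _
      · refine ⟨i + ((2 * j : ℕ) : Fin n), ?_, ?_⟩
        · by_contra hmem
          rw [hrem] at hmem
          obtain ⟨k, hk, he⟩ := hmem
          have := inj (2 * j) k (by omega) (by omega) he
          omega
        · have he : i + ((2 * j : ℕ) : Fin n) = first + 1 := by
            rw [hfirstdef, hf0, hcase, ← cast_succ]
            congr 2
            omega
          rw [he]; exact adj_succ' n _
  have hintN : intended n h.length first h = first := by
    unfold intended; rw [if_pos rfl]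
  have hgetN : l.get ⟨h.length, by omega⟩ = first := by
    have hc := hcons h.length (by omega) hodd (le_refl _)
    rw [hc, htake, strat_eq_intended n h.length first h (by rw [hintN]; exact hfirst_valid), hintN]
  -- the invariant
  have key : ∀ t : ℕ, ∀ ht : t < j,
      (∃ a, 1 - ε ≤ a ∧ a % 2 = 1 - ε ∧ a + (2 * (j - t) - 1) ≤ 2 * j - ε ∧
        (∀ m' : Fin n, m' ∉ l.take (h.length + 1 + 2 * t) ↔
          ∃ k, a ≤ k ∧ k < a + (2 * (j - t) - 1) ∧ m' = i + ((k : ℕ) : Fin n)))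
      ∧ (∀ t' : ℕ, ∀ ht' : t' ≤ t, ∃ k, k < 2 * j ∧ k % 2 = ε ∧
          l.get ⟨h.length + 2 * t', by omega⟩ = i + ((k : ℕ) : Fin n))
      ∧ (∀ t' : ℕ, 1 ≤ t' → ∀ ht' : t' ≤ t,
          adj n (l.get ⟨h.length + 2 * t', by omega⟩)
            (l.get ⟨h.length + 2 * t' - 1, by omega⟩)) := by
    intro t
    induction t with
    | zero =>
      intro ht
      refine ⟨⟨1 - ε, le_refl _, by omega, by omega, ?_⟩, ?_, ?_⟩
      · intro m'
        have hm : m' ∉ l.take (h.length + 1 + 2 * 0) ↔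
            (m' ∉ l.take h.length ∧ m' ≠ l.get ⟨h.length, by omega⟩) := by
          have := mem_take_succ_iff l h.length (by omega) m'
          constructor
          · intro hx; exact ⟨fun hc => hx (this.mpr (Or.inl hc)), fun hc => hx (this.mpr (Or.inr hc))⟩
          · intro hx hc; rcases this.mp hc with hc1 | hc1
            · exact hx.1 hc1
            · exact hx.2 hc1
        rw [hm, hgetN, hchar0]
        constructor
        · rintro ⟨⟨k, hk, rfl⟩, hne⟩
          have hkf : k ≠ f0 := fun he => hne (by rw [hfirstdef, he])
          exact ⟨k, by rcases hε01 with rfl | rfl <;> omega,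
            by rcases hε01 with rfl | rfl <;> omega, rfl⟩
        · rintro ⟨k, hk1, hk2, rfl⟩
          have hb : k < 2 * j ∧ k ≠ f0 := by rcases hε01 with rfl | rfl <;> omega
          refine ⟨⟨k, hb.1, rfl⟩, fun he => hb.2 (inj k f0 (by omega) (by omega) ?_)⟩
          rw [hfirstdef] at he; exact he
      · intro t' ht'
        have ht0 : t' = 0 := by omega
        subst ht0
        exact ⟨f0, hf0lt, hf0par, hgetN.trans hfirstdef⟩
      · intro t' h1 ht'
        omega
    | succ t ih =>
      intro ht
      obtain ⟨⟨a, ha1, ha2, ha3, hchar⟩, h2, h3⟩ := ih (by omega)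
      have hjt : 2 ≤ j - t := by omega
      have hab3 : a + 3 ≤ a + (2 * (j - t) - 1) := by omega
      obtain ⟨b, hbdef⟩ : ∃ b : ℕ, b = a + (2 * (j - t) - 1) := ⟨_, rfl⟩
      rw [← hbdef] at hchar ha3 hab3
      have hbb : b ≤ 2 * j - ε := ha3
      have hpA : h.length + 1 + 2 * t < l.length := by omega
      have hAlice := endpoint_forced n i l hl (h.length + 1 + 2 * t) hpA (by omega) a b
        (by omega) hchar
      have hpB : h.length + 2 * (t + 1) < l.length := by omega
      have hconsB := hcons (h.length + 2 * (t + 1)) (by omega) (by omega) (by omega)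
      have hlast : (l.take (h.length + 2 * (t + 1))).getLast?
          = some (l.get ⟨h.length + 1 + 2 * t, hpA⟩) := by
        rw [getLast?_take l _ (by omega) (by omega)]
        simp only [show h.length + 2 * (t + 1) - 1 = h.length + 1 + 2 * t from by omega]
      have hlenB : (l.take (h.length + 2 * (t + 1))).length = h.length + 2 * (t + 1) := by
        simp; omega
      have hsplitB : ∀ m' : Fin n, m' ∉ l.take (h.length + 2 * (t + 1)) ↔
          (m' ∉ l.take (h.length + 1 + 2 * t) ∧ m' ≠ l.get ⟨h.length + 1 + 2 * t, hpA⟩) := by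
        intro m'
        have heq : h.length + 2 * (t + 1) = (h.length + 1 + 2 * t) + 1 := by omega
        rw [heq]
        have := mem_take_succ_iff l (h.length + 1 + 2 * t) hpA m'
        constructor
        · intro hx; exact ⟨fun hc => hx (this.mpr (Or.inl hc)), fun hc => hx (this.mpr (Or.inr hc))⟩
        · intro hx hc; rcases this.mp hc with hc1 | hc1
          · exact hx.1 hc1
          · exact hx.2 hc1
      have hsplitB' : ∀ m' : Fin n, m' ∉ l.take (h.length + 1 + 2 * (t + 1)) ↔
          (m' ∉ l.take (h.length + 2 * (t + 1)) ∧ m' ≠ l.get ⟨h.length + 2 * (t + 1), hpB⟩) := by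
        intro m'
        have heq : h.length + 1 + 2 * (t + 1) = (h.length + 2 * (t + 1)) + 1 := by omega
        rw [heq]
        have := mem_take_succ_iff l (h.length + 2 * (t + 1)) hpB m'
        constructor
        · intro hx; exact ⟨fun hc => hx (this.mpr (Or.inl hc)), fun hc => hx (this.mpr (Or.inr hc))⟩
        · intro hx hc; rcases this.mp hc with hc1 | hc1
          · exact hx.1 hc1
          · exact hx.2 hc1
      rcases hAlice with hA | hA
      · -- Alice took the left endpoint i + a
        have hcharA : ∀ m' : Fin n, m' ∉ l.take (h.length + 2 * (t + 1)) ↔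
            ∃ k, a + 1 ≤ k ∧ k < b ∧ m' = i + ((k : ℕ) : Fin n) := by
          intro m'
          rw [hsplitB m', hchar, hA]
          constructor
          · rintro ⟨⟨k, hk1, hk2, rfl⟩, hne⟩
            have : k ≠ a := fun he => hne (by rw [he])
            exact ⟨k, by omega, hk2, rfl⟩
          · rintro ⟨k, hk1, hk2, rfl⟩
            exact ⟨⟨k, by omega, hk2, rfl⟩,
              fun he => by have := inj k a (by omega) (by omega) he; omega⟩
        have hx1 : l.get ⟨h.length + 1 + 2 * t, hpA⟩ + 1 = i + ((a + 1 : ℕ) : Fin n) := by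
          rw [hA, cast_succ]
        have hxnotmem : i + ((a + 1 : ℕ) : Fin n) ∉ l.take (h.length + 2 * (t + 1)) :=
          (hcharA _).mpr ⟨a + 1, le_refl _, by omega, rfl⟩
        have hxAmem : l.get ⟨h.length + 1 + 2 * t, hpA⟩ ∈ l.take (h.length + 2 * (t + 1)) :=
          mem_take_of_get l _ _ (by omega) (by omega)
        have hint : intended n h.length first (l.take (h.length + 2 * (t + 1)))
            = i + ((a + 1 : ℕ) : Fin n) := by
          rw [intended_eq n h.length first _ _ (by rw [hlenB]; omega) hlast,
            if_neg (by rw [hx1]; exact hxnotmem), hx1]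
        have hvalid : ValidMove n (l.take (h.length + 2 * (t + 1))) (i + ((a + 1 : ℕ) : Fin n)) := by
          refine ⟨hxnotmem, Or.inr ⟨l.get ⟨h.length + 1 + 2 * t, hpA⟩, hxAmem, ?_⟩⟩
          rw [hA, cast_succ]
          exact adj_succ n _
        have hgetB : l.get ⟨h.length + 2 * (t + 1), by omega⟩ = i + ((a + 1 : ℕ) : Fin n) := by
          rw [hconsB, strat_eq_intended n h.length first _ (by rw [hint]; exact hvalid), hint]
        refine ⟨⟨a + 2, by omega, by omega, by omega, ?_⟩, ?_, ?_⟩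
        · intro m'
          rw [hsplitB' m', hcharA, hgetB]
          constructor
          · rintro ⟨⟨k, hk1, hk2, rfl⟩, hne⟩
            have : k ≠ a + 1 := fun he => hne (by rw [he])
            exact ⟨k, by omega, by omega, rfl⟩
          · rintro ⟨k, hk1, hk2, rfl⟩
            exact ⟨⟨k, by omega, by omega, rfl⟩,
              fun he => by have := inj k (a + 1) (by omega) (by omega) he; omega⟩
        · intro t' ht'
          by_cases hc : t' ≤ t
          · exact h2 t' hc
          · have ht0 : t' = t + 1 := by omega
            subst ht0
            exact ⟨a + 1, by omega, by rcases hε01 with rfl | rfl <;> omega, hgetB⟩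
        · intro t' h1 ht'
          by_cases hc : t' ≤ t
          · exact h3 t' h1 hc
          · have ht0 : t' = t + 1 := by omega
            subst ht0
            have hidx : h.length + 2 * (t + 1) - 1 = h.length + 1 + 2 * t := by omega
            simp only [hidx]
            rw [hgetB, hA, cast_succ]
            exact adj_succ n _
      · -- Alice took the right endpoint i + (b - 1)
        have hcharA : ∀ m' : Fin n, m' ∉ l.take (h.length + 2 * (t + 1)) ↔
            ∃ k, a ≤ k ∧ k < b - 1 ∧ m' = i + ((k : ℕ) : Fin n) := by
          intro m'
          rw [hsplitB m', hchar, hA]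
          constructor
          · rintro ⟨⟨k, hk1, hk2, rfl⟩, hne⟩
            have : k ≠ b - 1 := fun he => hne (by rw [he])
            exact ⟨k, hk1, by omega, rfl⟩
          · rintro ⟨k, hk1, hk2, rfl⟩
            exact ⟨⟨k, hk1, by omega, rfl⟩,
              fun he => by have := inj k (b - 1) (by omega) (by omega) he; omega⟩
        have hx1 : l.get ⟨h.length + 1 + 2 * t, hpA⟩ + 1 = i + ((b : ℕ) : Fin n) := by
          rw [hA, ← cast_succ]
          congr 2
          omega
        have hbmem : i + ((b : ℕ) : Fin n) ∈ l.take (h.length + 2 * (t + 1)) := by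
          by_contra hc
          obtain ⟨k, hk1, hk2, he⟩ := (hcharA _).mp hc
          have := inj b k (by omega) (by omega) he
          omega
        have hx2 : l.get ⟨h.length + 1 + 2 * t, hpA⟩ = i + ((b - 2 : ℕ) : Fin n) + 1 := by
          rw [hA, ← cast_succ]
          congr 2
          omega
        have hx3 : l.get ⟨h.length + 1 + 2 * t, hpA⟩ - 1 = i + ((b - 2 : ℕ) : Fin n) := by
          rw [hx2]; abel
        have hxnotmem : i + ((b - 2 : ℕ) : Fin n) ∉ l.take (h.length + 2 * (t + 1)) :=
          (hcharA _).mpr ⟨b - 2, by omega, by omega, rfl⟩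
        have hxAmem : l.get ⟨h.length + 1 + 2 * t, hpA⟩ ∈ l.take (h.length + 2 * (t + 1)) :=
          mem_take_of_get l _ _ (by omega) (by omega)
        have hint : intended n h.length first (l.take (h.length + 2 * (t + 1)))
            = i + ((b - 2 : ℕ) : Fin n) := by
          rw [intended_eq n h.length first _ _ (by rw [hlenB]; omega) hlast,
            if_pos (by rw [hx1]; exact hbmem), hx3]
        have hvalid : ValidMove n (l.take (h.length + 2 * (t + 1))) (i + ((b - 2 : ℕ) : Fin n)) := by
          refine ⟨hxnotmem, Or.inr ⟨l.get ⟨h.length + 1 + 2 * t, hpA⟩, hxAmem, ?_⟩⟩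
          rw [hx2]
          exact adj_succ' n _
        have hgetB : l.get ⟨h.length + 2 * (t + 1), by omega⟩ = i + ((b - 2 : ℕ) : Fin n) := by
          rw [hconsB, strat_eq_intended n h.length first _ (by rw [hint]; exact hvalid), hint]
        refine ⟨⟨a, ha1, ha2, by omega, ?_⟩, ?_, ?_⟩
        · intro m'
          have hb2 : a + (2 * (j - (t + 1)) - 1) = b - 2 := by omega
          rw [hsplitB' m', hcharA, hgetB, hb2]
          constructor
          · rintro ⟨⟨k, hk1, hk2, rfl⟩, hne⟩
            have : k ≠ b - 2 := fun he => hne (by rw [he])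
            exact ⟨k, hk1, by omega, rfl⟩
          · rintro ⟨k, hk1, hk2, rfl⟩
            exact ⟨⟨k, hk1, by omega, rfl⟩,
              fun he => by have := inj k (b - 2) (by omega) (by omega) he; omega⟩
        · intro t' ht'
          by_cases hc : t' ≤ t
          · exact h2 t' hc
          · have ht0 : t' = t + 1 := by omega
            subst ht0
            exact ⟨b - 2, by omega, by rcases hε01 with rfl | rfl <;> omega, hgetB⟩
        · intro t' h1 ht'
          by_cases hc : t' ≤ t
          · exact h3 t' h1 hc
          · have ht0 : t' = t + 1 := by omega
            subst ht0
            have hidx : h.length + 2 * (t + 1) - 1 = h.length + 1 + 2 * t := by omega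
            simp only [hidx]
            rw [hgetB, hx2]
            exact adj_succ' n _
  -- conclusions
  obtain ⟨-, hK2, hK3⟩ := key (j - 1) (by omega)
  constructor
  · intro t0 ht0 ht0' hgt hodd0
    have hx : ∃ t', t0 = h.length + 2 * t' ∧ 1 ≤ t' ∧ t' ≤ j - 1 :=
      ⟨(t0 - h.length) / 2, by omega, by omega, by omega⟩
    obtain ⟨t', rfl, h1', h2'⟩ := hx
    exact hK3 t' h1' h2'
  · -- the gain computation
    have hK2' : ∀ t' : ℕ, ∀ ht0 : t' < j, ∃ k, k < 2 * j ∧ k % 2 = ε ∧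
        l.get ⟨h.length + 2 * t', by omega⟩ = i + ((k : ℕ) : Fin n) :=
      fun t' ht' => hK2 t' (by omega)
    choose κ hκ1 hκ2 hκ3 using hK2'
    obtain ⟨G, hGdef⟩ : ∃ G : ℕ → ℝ, G = fun t' =>
      if hx : h.length + 2 * t' < l.length then P (l.get ⟨h.length + 2 * t', hx⟩) else 0 :=
      ⟨_, rfl⟩
    have hgain_eq : gainOn n P (fun k => (k % 2 == 1) && decide (h.length ≤ k)) l
        = ∑ t' ∈ Finset.range j, G t' := by
      rw [gainOn_eq]
      have e1 : (∑ k : Fin l.length,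
            if ((k.val % 2 == 1) && decide (h.length ≤ k.val)) = true then P (l.get k) else 0)
          = ∑ k ∈ Finset.univ.filter
              (fun k : Fin l.length => k.val % 2 = 1 ∧ h.length ≤ k.val), P (l.get k) := by
        rw [Finset.sum_filter]
        refine Finset.sum_congr rfl fun k _ => ?_
        by_cases h1 : k.val % 2 = 1 <;> by_cases h2 : h.length ≤ k.val <;> simp [h1, h2]
      rw [e1]
      refine Finset.sum_bij' (i := fun (k : Fin l.length) _ => (k.val - h.length) / 2)
        (j := fun t' ht' => (⟨h.length + 2 * t', by
          have := Finset.mem_range.mp ht'; omega⟩ : Fin l.length)) ?_ ?_ ?_ ?_ ?_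
      · intro k hk
        simp only [Finset.mem_filter, Finset.mem_univ, true_and] at hk
        have hkl := k.isLt
        simp only [Finset.mem_range]
        omega
      · intro t' ht'
        simp only [Finset.mem_filter, Finset.mem_univ, true_and]
        have := Finset.mem_range.mp ht'
        omega
      · intro k hk
        simp only [Finset.mem_filter, Finset.mem_univ, true_and] at hk
        apply Fin.ext
        simp only []
        omega
      · intro t' ht'
        simp only []
        omega
      · intro k hk
        simp only [Finset.mem_filter, Finset.mem_univ, true_and] at hk
        simp only [hGdef]
        rw [dif_pos (by have := k.isLt; omega : h.length + 2 * ((k.val - h.length) / 2) < l.length)]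
        congr 1
        apply congrArg
        apply Fin.ext
        simp only []
        omega
    have himg : (Finset.range (2 * j)).filter (fun m => m % 2 = ε)
        = (Finset.range j).image (fun k => 2 * k + ε) := by
      ext m
      simp only [Finset.mem_filter, Finset.mem_range, Finset.mem_image]
      constructor
      · rintro ⟨hm1, hm2⟩
        exact ⟨(m - ε) / 2, by omega, by omega⟩
      · rintro ⟨k, hk, rfl⟩
        omega
    have hsum2 : (∑ t' ∈ Finset.range j, G t')
        = ∑ m ∈ (Finset.range (2 * j)).filter (fun m => m % 2 = ε),
            P (i + ((m : ℕ) : Fin n)) := by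
      refine Finset.sum_bij (i := fun t' ht' => κ t' (Finset.mem_range.mp ht')) ?_ ?_ ?_ ?_
      · intro t' ht'
        simp only [Finset.mem_filter, Finset.mem_range]
        exact ⟨hκ1 t' _, hκ2 t' _⟩
      · intro t1 h1 t2 h2 he
        replace he : κ t1 (Finset.mem_range.mp h1) = κ t2 (Finset.mem_range.mp h2) := he
        have hg1 := hκ3 t1 (Finset.mem_range.mp h1)
        have hg2 := hκ3 t2 (Finset.mem_range.mp h2)
        rw [he] at hg1
        have := hg1.trans hg2.symm
        have hidx := (List.Nodup.get_inj_iff hl.1).mp this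
        have := Fin.mk.injEq _ _ _ _ ▸ hidx
        omega
      · intro m hm
        simp only [Finset.mem_filter, Finset.mem_range] at hm
        by_contra hc
        push_neg at hc
        -- counting argument: κ is injective from range j into a set of size j
        have hinj : Set.InjOn (fun t' : ℕ => if ht' : t' < j then κ t' ht' else 0)
            (Finset.range j) := by
          intro t1 h1 t2 h2 he
          simp only [Finset.mem_coe, Finset.mem_range] at h1 h2
          replace he : (if ht : t1 < j then κ t1 ht else 0)
              = (if ht : t2 < j then κ t2 ht else 0) := he
          rw [dif_pos h1, dif_pos h2] at he
          have hg1 := hκ3 t1 h1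
          have hg2 := hκ3 t2 h2
          rw [he] at hg1
          have := hg1.trans hg2.symm
          have hidx := (List.Nodup.get_inj_iff hl.1).mp this
          have := Fin.mk.injEq _ _ _ _ ▸ hidx
          omega
        have hmaps : (Finset.range j).image (fun t' : ℕ => if ht' : t' < j then κ t' ht' else 0)
            ⊆ ((Finset.range (2 * j)).filter (fun m => m % 2 = ε)).erase m := by
          intro x hx
          simp only [Finset.mem_image, Finset.mem_range] at hx
          obtain ⟨t', ht', rfl⟩ := hx
          rw [dif_pos ht']
          refine Finset.mem_erase.mpr ⟨?_, ?_⟩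
          · intro he; exact hc t' (Finset.mem_range.mpr ht') (he ▸ rfl)
          · simp only [Finset.mem_filter, Finset.mem_range]
            exact ⟨hκ1 t' ht', hκ2 t' ht'⟩
        have hcard1 : ((Finset.range j).image
            (fun t' : ℕ => if ht' : t' < j then κ t' ht' else 0)).card = j := by
          rw [Finset.card_image_of_injOn hinj, Finset.card_range]
        have hcard2 : (((Finset.range (2 * j)).filter (fun m => m % 2 = ε)).erase m).card
            < j := by
          have hcf : ((Finset.range (2 * j)).filter (fun m => m % 2 = ε)).card = j := by
            rw [himg, Finset.card_image_of_injOn (fun x _ y _ he => by omega),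
              Finset.card_range]
          have hmemm : m ∈ (Finset.range (2 * j)).filter (fun m => m % 2 = ε) :=
            Finset.mem_filter.mpr ⟨Finset.mem_range.mpr hm.1, hm.2⟩
          have := Finset.card_erase_of_mem hmemm
          omega
        have := Finset.card_le_card hmaps
        omega
      · intro t' ht'
        simp only [hGdef]
        rw [dif_pos (by have := Finset.mem_range.mp ht'; omega :
          h.length + 2 * t' < l.length)]
        rw [hκ3 t' (Finset.mem_range.mp ht')]
    have hsum3 : (∑ m ∈ (Finset.range (2 * j)).filter (fun m => m % 2 = ε),
          P (i + ((m : ℕ) : Fin n)))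
        = ∑ k ∈ Finset.range j, P (i + ((2 * k + ε : ℕ) : Fin n)) := by
      rw [himg, Finset.sum_image (fun x _ y _ he => by omega)]
    rw [hgain_eq, hsum2, hsum3]

end PizzaAux

open Fin.NatCast in
/-- before any of Bob\'s turns the remaining slices form an arc
`p_i … p_{i+2j-1}` of even length; Bob has a continuation strategy, making only
shifts except possibly for his first turn, which guarantees him in addition
the larger of the two alternating classes `K` (even offsets) and `L` (odd offsets). -/
theorem bob_gets_max_alternating_class (n : ℕ) [NeZero n]
    (P : Fin n → ℝ) (hP : ∀ i, 0 ≤ P i)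
    (h : List (Fin n)) (hh : ValidHist n h) (hodd : h.length % 2 = 1)
    (j : ℕ) (hj : 1 ≤ j) (hlen : h.length + 2 * j = n)
    (i : Fin n)
    (hrem : ∀ m : Fin n, m ∉ h ↔ ∃ k < 2 * j, m = i + ((k : ℕ) : Fin n)) :
    ∃ s : List (Fin n) → Fin n,
      (∀ h', ValidHist n h' → h'.length < n → h'.length % 2 = 1 → h <+: h' →
        ValidMove n h' (s h')) ∧
      ∀ l : List (Fin n), ValidHist n l → l.length = n → h <+: l →
        (∀ (k : ℕ) (hk : k < l.length), k % 2 = 1 → h.length ≤ k →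
          l.get ⟨k, hk⟩ = s (l.take k)) →
        (∀ (t : ℕ) (ht : t < l.length) (ht' : t - 1 < l.length),
          h.length < t → t % 2 = 1 → adj n (l.get ⟨t, ht⟩) (l.get ⟨t - 1, ht'⟩)) ∧
        max (∑ k ∈ Finset.range j, P (i + (((2 * k : ℕ)) : Fin n)))
            (∑ k ∈ Finset.range j, P (i + (((2 * k + 1 : ℕ)) : Fin n)))
          ≤ gainOn n P (fun k => (k % 2 == 1) && (h.length ≤ k : Bool)) l := by
  rcases le_total (∑ k ∈ Finset.range j, P (i + (((2 * k : ℕ)) : Fin n)))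
      (∑ k ∈ Finset.range j, P (i + (((2 * k + 1 : ℕ)) : Fin n))) with hc | hc
  · obtain ⟨s, hs1, hs2⟩ := PizzaAux.main_aux n P h hh hodd j hj hlen i hrem 1 (le_refl 1)
    refine ⟨s, fun h' _ hl' _ _ => hs1 h' hl', ?_⟩
    intro l hl hn hpre hcons
    obtain ⟨c1, c2⟩ := hs2 l hl hn hpre hcons
    refine ⟨c1, ?_⟩
    rw [max_eq_right hc]
    exact c2
  · obtain ⟨s, hs1, hs2⟩ := PizzaAux.main_aux n P h hh hodd j hj hlen i hrem 0 (by omega)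
    refine ⟨s, fun h' _ hl' _ _ => hs1 h' hl', ?_⟩
    intro l hl hn hpre hcons
    obtain ⟨c1, c2⟩ := hs2 l hl hn hpre hcons
    refine ⟨c1, ?_⟩
    rw [max_eq_left hc]
    refine le_trans (le_of_eq ?_) c2
    exact Finset.sum_congr rfl fun k _ => by norm_num
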